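/- The set {ξ ↦ |ξ| (ℱφ)(ξ) : φ ∈ 𝒮(ℝⁿ)} is dense in L²(ℝⁿ), where ℱ is the Fourier transform and 𝒮 is the Schwartz space. -/

import Mathlib

open MeasureTheory FourierTransform Metric Set Function
open scoped Convolution ENNReal Topology

namespace DenseAux


variable {n : ℕ}

/-- A smooth compactly supported function as a Schwartz map. -/
noncomputable def toSchwartz (f : EuclideanSpace ℝ (Fin n) → ℂ) (hf : ContDiff ℝ ((⊤ : ℕ∞) : WithTop ℕ∞) f)
    (hsupp : HasCompactSupport f) : SchwartzMap (EuclideanSpace ℝ (Fin n)) ℂ where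
  toFun := f
  smooth' := hf
  decay' := by
    intro k m
    have hcont : Continuous fun x : EuclideanSpace ℝ (Fin n) =>
        ‖x‖ ^ k * ‖iteratedFDeriv ℝ m f x‖ :=
      (continuous_norm.pow k).mul (hf.continuous_iteratedFDeriv (by exact_mod_cast le_top)).norm
    have hsupp2 : HasCompactSupport fun x : EuclideanSpace ℝ (Fin n) =>
        ‖x‖ ^ k * ‖iteratedFDeriv ℝ m f x‖ := by
      apply HasCompactSupport.intro (hsupp.iteratedFDeriv (𝕜 := ℝ) m)
      intro x hx
      rw [image_eq_zero_of_notMem_tsupport hx]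
      simp
    obtain ⟨C, hC⟩ := hcont.bounded_above_of_compact_support hsupp2
    exact ⟨C, fun x => (le_abs_self _).trans ((Real.norm_eq_abs _) ▸ hC x)⟩

@[simp] lemma toSchwartz_apply (f : EuclideanSpace ℝ (Fin n) → ℂ) (hf : ContDiff ℝ ((⊤ : ℕ∞) : WithTop ℕ∞) f)
    (hsupp : HasCompactSupport f) (x : EuclideanSpace ℝ (Fin n)) :
    toSchwartz f hf hsupp x = f x := rfl



theorem mem_test (h : EuclideanSpace ℝ (Fin n) → ℂ)
    (hsm : ContDiff ℝ ((⊤ : ℕ∞) : WithTop ℕ∞) h) (hsupp : HasCompactSupport h)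
    {δ : ℝ} (hδ : 0 < δ) (h0 : ∀ x ∈ ball (0 : EuclideanSpace ℝ (Fin n)) δ, h x = 0) :
    ∃ φ : SchwartzMap (EuclideanSpace ℝ (Fin n)) ℂ,
      ∀ ξ, h ξ = (‖ξ‖ : ℂ) * 𝓕 (φ : EuclideanSpace ℝ (Fin n) → ℂ) ξ := by
  set ψ : EuclideanSpace ℝ (Fin n) → ℂ := fun ξ => (‖ξ‖ : ℂ)⁻¹ * h ξ with hψ
  have hψ_sm : ContDiff ℝ ((⊤ : ℕ∞) : WithTop ℕ∞) ψ := by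
    rw [contDiff_iff_contDiffAt]
    intro x
    by_cases hx : x ∈ ball (0 : EuclideanSpace ℝ (Fin n)) δ
    · refine contDiffAt_const (c := 0).congr_of_eventuallyEq ?_
      filter_upwards [isOpen_ball.mem_nhds hx] with y hy
      simp [hψ, h0 y hy]
    · have hx0 : x ≠ 0 := by
        intro h'
        exact hx (by simp [h', mem_ball, hδ])
      have h1 : ContDiffAt ℝ ((⊤ : ℕ∞) : WithTop ℕ∞) (fun ξ : EuclideanSpace ℝ (Fin n) => (‖ξ‖ : ℂ)) x :=
        Complex.ofRealCLM.contDiff.contDiffAt.comp x (contDiffAt_norm ℝ hx0)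
      have h2 : ContDiffAt ℝ ((⊤ : ℕ∞) : WithTop ℕ∞)
          (fun ξ : EuclideanSpace ℝ (Fin n) => (‖ξ‖ : ℂ)⁻¹) x := by
        apply h1.inv
        simpa using norm_ne_zero_iff.mpr hx0
      exact h2.mul hsm.contDiffAt
  have hψ_supp : HasCompactSupport ψ := by
    apply hsupp.mono
    intro x hx
    simp only [hψ, mem_support, ne_eq] at hx ⊢
    intro h'
    exact hx (by simp [h'])
  refine ⟨(SchwartzMap.fourierTransformCLE ℂ (SchwartzMap (EuclideanSpace ℝ (Fin n)) ℂ) (F := SchwartzMap (EuclideanSpace ℝ (Fin n)) ℂ)).symm (toSchwartz ψ hψ_sm hψ_supp), fun ξ => ?_⟩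
  have hFT : 𝓕 (((SchwartzMap.fourierTransformCLE ℂ (SchwartzMap (EuclideanSpace ℝ (Fin n)) ℂ) (F := SchwartzMap (EuclideanSpace ℝ (Fin n)) ℂ)).symm (toSchwartz ψ hψ_sm hψ_supp) :
      SchwartzMap (EuclideanSpace ℝ (Fin n)) ℂ) : EuclideanSpace ℝ (Fin n) → ℂ) = ψ := by
    have := (SchwartzMap.fourierTransformCLE ℂ (SchwartzMap (EuclideanSpace ℝ (Fin n)) ℂ) (F := SchwartzMap (EuclideanSpace ℝ (Fin n)) ℂ)).apply_symm_apply (toSchwartz ψ hψ_sm hψ_supp)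
    calc 𝓕 ⇑((SchwartzMap.fourierTransformCLE ℂ (SchwartzMap (EuclideanSpace ℝ (Fin n)) ℂ) (F := SchwartzMap (EuclideanSpace ℝ (Fin n)) ℂ)).symm (toSchwartz ψ hψ_sm hψ_supp))
        = ⇑(SchwartzMap.fourierTransformCLE ℂ (SchwartzMap (EuclideanSpace ℝ (Fin n)) ℂ) (F := SchwartzMap (EuclideanSpace ℝ (Fin n)) ℂ)
            ((SchwartzMap.fourierTransformCLE ℂ (SchwartzMap (EuclideanSpace ℝ (Fin n)) ℂ) (F := SchwartzMap (EuclideanSpace ℝ (Fin n)) ℂ)).symm (toSchwartz ψ hψ_sm hψ_supp))) :=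
          rfl
      _ = ψ := by rw [this]; rfl
  rw [hFT]
  by_cases hξ : ξ = 0
  · simp [hξ, hψ, h0 0 (by simp [mem_ball, hδ])]
  · have : (‖ξ‖ : ℂ) ≠ 0 := by simpa using norm_ne_zero_iff.mpr hξ
    simp only [hψ]; rw [mul_inv_cancel_left₀ this]



/-- L² bound for a function bounded by `c` and supported in `s`. -/
theorem bnd (u : EuclideanSpace ℝ (Fin n) → ℂ) {s : Set (EuclideanSpace ℝ (Fin n))}
    (hs : MeasurableSet s) (hsupp : support u ⊆ s) {c : ℝ}
    (hbd : ∀ x, ‖u x‖ ≤ c) :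
    eLpNorm u 2 volume ≤ ENNReal.ofReal c * (volume s) ^ (1 / (2:ℝ)) := by
  have hc : 0 ≤ c := le_trans (norm_nonneg _) (hbd 0)
  have h1 : eLpNorm u 2 volume ≤ eLpNorm (s.indicator fun _ => (c : ℝ)) 2 volume := by
    apply eLpNorm_mono fun x => ?_
    by_cases hx : x ∈ s
    · simpa [indicator_of_mem hx, abs_of_nonneg hc] using hbd x
    · have : u x = 0 := by
        by_contra h'
        exact hx (hsupp h')
      simp [this, indicator_of_notMem hx]
  refine h1.trans ?_
  rw [eLpNorm_indicator_const hs (by norm_num) (by norm_num)]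
  simp only [ENNReal.toReal_ofNat]
  rw [Real.enorm_eq_ofReal hc]

theorem approx (hn : 1 ≤ n) (f : Lp ℂ 2 (volume : Measure (EuclideanSpace ℝ (Fin n))))
    {ε : ℝ} (hε : 0 < ε) :
    ∃ (h : EuclideanSpace ℝ (Fin n) → ℂ) (hmem : MemLp h 2 volume) (δ : ℝ),
      0 < δ ∧ ContDiff ℝ ((⊤ : ℕ∞) : WithTop ℕ∞) h ∧ HasCompactSupport h ∧
      (∀ x ∈ ball (0 : EuclideanSpace ℝ (Fin n)) δ, h x = 0) ∧
      dist f (hmem.toLp h) < ε := by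
  -- Step 1: continuous compactly supported approximation
  obtain ⟨g, hg_supp, hfg, hg_cont, hg_mem⟩ :=
    (Lp.memLp f).exists_hasCompactSupport_eLpNorm_sub_le (by norm_num : (2:ℝ≥0∞) ≠ ∞)
      (ε := ENNReal.ofReal (ε/4)) (ne_of_gt (ENNReal.ofReal_pos.mpr (by linarith)))
  -- Step 2: smoothing by convolution
  set K : Set (EuclideanSpace ℝ (Fin n)) := cthickening 1 (tsupport g) with hK
  have hK_comp : IsCompact K := hg_supp.cthickening
  have hKm : MeasurableSet K := isClosed_cthickening.measurableSet
  have hKfin : volume K ≠ ⊤ := hK_comp.measure_lt_top.ne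
  have hVfin : (volume K) ^ (1/(2:ℝ)) ≠ ⊤ := by
    apply ENNReal.rpow_ne_top_of_nonneg (by norm_num) hKfin
  set V : ℝ := ((volume K) ^ (1/(2:ℝ))).toReal with hVdef
  have hV : 0 ≤ V := ENNReal.toReal_nonneg
  set c₂ : ℝ := (ε/8)/(V+1) with hc₂def
  have hc₂ : 0 < c₂ := by positivity
  have key2 : ENNReal.ofReal c₂ * (volume K) ^ (1/(2:ℝ)) ≤ ENNReal.ofReal (ε/4) := by
    rw [← ENNReal.ofReal_toReal hVfin, ← ENNReal.ofReal_mul hc₂.le]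
    apply ENNReal.ofReal_le_ofReal
    rw [← hVdef]
    have h1 : c₂ * (V+1) = ε/8 := by rw [hc₂def]; field_simp
    nlinarith
  have huc := hg_supp.uniformContinuous_of_continuous hg_cont
  rw [Metric.uniformContinuous_iff] at huc
  obtain ⟨ρ, hρ, hρ'⟩ := huc c₂ hc₂
  set t : ℝ := min (ρ/2) 1 with htdef
  have ht : 0 < t := lt_min (by linarith) one_pos
  have ht1 : t ≤ 1 := min_le_right _ _
  have htρ : t < ρ := lt_of_le_of_lt (min_le_left _ _) (by linarith)
  set φb : ContDiffBump (0 : EuclideanSpace ℝ (Fin n)) := ⟨t/2, t, by positivity, by linarith⟩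
  set h₀ : EuclideanSpace ℝ (Fin n) → ℂ :=
    (φb.normed volume) ⋆[ContinuousLinearMap.lsmul ℝ ℝ, volume] g with hh₀def
  have hh₀_sm : ContDiff ℝ ((⊤ : ℕ∞) : WithTop ℕ∞) h₀ :=
    φb.hasCompactSupport_normed.contDiff_convolution_left _ φb.contDiff_normed
      (hg_cont.locallyIntegrable)
  have hh₀_cont : Continuous h₀ := hh₀_sm.continuous
  have hh₀_supp : HasCompactSupport h₀ :=
    HasCompactSupport.convolution (L := ContinuousLinearMap.lsmul ℝ ℝ) (μ := volume)
      φb.hasCompactSupport_normed hg_supp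
  have hgh₀ : ∀ x, dist (h₀ x) (g x) ≤ c₂ := by
    intro x
    apply φb.dist_normed_convolution_le hg_cont.aestronglyMeasurable
    intro y hy
    exact (hρ' (show dist y x < ρ from lt_trans (mem_ball.mp hy) htρ)).le
  have hsub2 : support (g - h₀) ⊆ K := by
    have hgK : support g ⊆ K :=
      subset_trans (subset_tsupport g) (self_subset_cthickening _)
    have hh₀K : support h₀ ⊆ K := by
      refine subset_trans (support_convolution_subset (μ := volume)
        (f := φb.normed volume) (g := g) (ContinuousLinearMap.lsmul ℝ ℝ)) ?_
      rintro x ⟨a, ha, b, hb, rfl⟩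
      have haball : a ∈ ball (0 : EuclideanSpace ℝ (Fin n)) t := by
        rw [← φb.support_normed_eq (μ := volume)]; exact ha
      apply mem_cthickening_of_dist_le (a + b) b _ _ (subset_tsupport g hb)
      rw [dist_eq_norm]
      simp only [add_sub_cancel_right]
      have := mem_ball_zero_iff.mp haball
      linarith
    intro x hx
    have : g x ≠ 0 ∨ h₀ x ≠ 0 := by
      by_contra h'
      push_neg at h'
      simp only [mem_support, Pi.sub_apply, h'.1, h'.2, sub_zero, ne_eq, not_true_eq_false] at hx
    rcases this with h' | h'
    · exact hgK h'
    · exact hh₀K h'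
  have step2 : eLpNorm (g - h₀) 2 volume ≤ ENNReal.ofReal (ε/4) := by
    refine (bnd _ hKm hsub2 (c := c₂) ?_).trans key2
    intro x
    rw [Pi.sub_apply, ← dist_eq_norm, dist_comm]
    exact hgh₀ x
  -- Step 3: cutting off near the origin
  obtain ⟨C₀, hC₀⟩ := (hh₀_cont.norm).bounded_above_of_compact_support hh₀_supp.norm
  set C : ℝ := max C₀ 1 with hCdef
  have hC : 0 < C := lt_of_lt_of_le one_pos (le_max_right _ _)
  have hCbd : ∀ x, ‖h₀ x‖ ≤ C := by
    intro x
    refine le_trans ?_ (le_max_left _ _)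
    simpa [Real.norm_eq_abs, abs_of_nonneg (norm_nonneg (h₀ x))] using hC₀ x
  set η : ℝ≥0∞ := (ENNReal.ofReal (ε/(4*C)))^2 with hηdef
  have hη : 0 < η := by
    apply ENNReal.pow_pos
    apply ENNReal.ofReal_pos.mpr
    positivity
  have hvol : Filter.Tendsto (fun s : ℝ => volume (closedBall (0 : EuclideanSpace ℝ (Fin n)) s))
      (𝓝[>] 0) (𝓝 0) := by
    have h1 : Filter.Tendsto (fun s : ℝ => ENNReal.ofReal (s ^ n) *
        volume (ball (0 : EuclideanSpace ℝ (Fin n)) 1)) (𝓝[>] 0) (𝓝 0) := by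
      have h2 : Filter.Tendsto (fun s : ℝ => s ^ n) (𝓝 0) (𝓝 0) := by
        simpa [zero_pow (by omega : n ≠ 0)] using (continuous_pow n).tendsto (0 : ℝ)
      have h3 := ENNReal.Tendsto.mul_const (ENNReal.tendsto_ofReal h2)
        (b := volume (ball (0 : EuclideanSpace ℝ (Fin n)) 1))
        (Or.inr measure_ball_lt_top.ne)
      simpa using h3.mono_left nhdsWithin_le_nhds
    refine h1.congr' ?_
    filter_upwards [self_mem_nhdsWithin] with s hs
    rw [Measure.addHaar_closedBall (volume : Measure (EuclideanSpace ℝ (Fin n))) 0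
      (mem_Ioi.mp hs).le, finrank_euclideanSpace_fin]
  obtain ⟨s, hsη, hs⟩ := ((hvol.eventually_lt_const hη).and self_mem_nhdsWithin).exists
  have hsball : MeasurableSet (closedBall (0 : EuclideanSpace ℝ (Fin n)) s) :=
    measurableSet_closedBall
  have key3 : ENNReal.ofReal C *
      (volume (closedBall (0 : EuclideanSpace ℝ (Fin n)) s)) ^ (1/(2:ℝ)) ≤
      ENNReal.ofReal (ε/4) := by
    have h2 : (volume (closedBall (0 : EuclideanSpace ℝ (Fin n)) s)) ^ (1/(2:ℝ)) ≤
        η ^ (1/(2:ℝ)) := ENNReal.rpow_le_rpow hsη.le (by norm_num)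
    have h3 : η ^ (1/(2:ℝ)) = ENNReal.ofReal (ε/(4*C)) := by
      rw [hηdef, ← ENNReal.rpow_natCast _ 2, ← ENNReal.rpow_mul]
      norm_num
    calc ENNReal.ofReal C * (volume (closedBall (0 : EuclideanSpace ℝ (Fin n)) s)) ^ (1/(2:ℝ))
        ≤ ENNReal.ofReal C * ENNReal.ofReal (ε/(4*C)) := by
          rw [← h3]; gcongr
      _ = ENNReal.ofReal (C * (ε/(4*C))) := (ENNReal.ofReal_mul hC.le).symm
      _ = ENNReal.ofReal (ε/4) := by
          congr 1
          field_simp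
  set β : ContDiffBump (0 : EuclideanSpace ℝ (Fin n)) := ⟨s/2, s, by positivity, by linarith⟩
  set h : EuclideanSpace ℝ (Fin n) → ℂ := fun x => (1 - β x) • h₀ x with hhdef
  have hh_sm : ContDiff ℝ ((⊤ : ℕ∞) : WithTop ℕ∞) h :=
    (contDiff_const.sub β.contDiff).smul hh₀_sm
  have hh_supp : HasCompactSupport h := by
    apply hh₀_supp.mono
    intro x hx
    simp only [hhdef, mem_support, ne_eq] at hx ⊢
    intro h'
    exact hx (by simp [h'])
  have hh_van : ∀ x ∈ ball (0 : EuclideanSpace ℝ (Fin n)) (s/2), h x = 0 := by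
    intro x hx
    have : β x = 1 := β.one_of_mem_closedBall (ball_subset_closedBall hx)
    simp [hhdef, this]
  have step3 : eLpNorm (h₀ - h) 2 volume ≤ ENNReal.ofReal (ε/4) := by
    have heq : h₀ - h = fun x => β x • h₀ x := by
      funext x
      simp only [Pi.sub_apply, hhdef, sub_smul, one_smul]
      abel
    rw [heq]
    refine (bnd _ hsball ?_ (c := C) ?_).trans key3
    · intro x hx
      apply ball_subset_closedBall
      rw [← β.support_eq]
      simp only [mem_support, ne_eq] at hx ⊢
      intro h'
      exact hx (by simp [h'])
    · intro x
      rw [norm_smul]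
      calc ‖β x‖ * ‖h₀ x‖ ≤ 1 * C := by
            apply mul_le_mul ?_ (hCbd x) (norm_nonneg _) one_pos.le
            rw [Real.norm_eq_abs, abs_of_nonneg (β.nonneg)]
            exact β.le_one
        _ = C := one_mul C
  -- Conclusion
  have hmem : MemLp h 2 volume := hh_sm.continuous.memLp_of_hasCompactSupport hh_supp
  refine ⟨h, hmem, s/2, by positivity, hh_sm, hh_supp, hh_van, ?_⟩
  have htot : eLpNorm ((f : EuclideanSpace ℝ (Fin n) → ℂ) - h) 2 volume ≤
      ENNReal.ofReal (3*(ε/4)) := by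
    have hdecomp : (f : EuclideanSpace ℝ (Fin n) → ℂ) - h =
        ((f : EuclideanSpace ℝ (Fin n) → ℂ) - g) + ((g - h₀) + (h₀ - h)) := by
      funext x
      simp only [Pi.sub_apply, Pi.add_apply]
      ring
    rw [hdecomp]
    have a1 := (Lp.aestronglyMeasurable f)
    have a2 : AEStronglyMeasurable g volume := hg_cont.aestronglyMeasurable
    have a3 : AEStronglyMeasurable h₀ volume := hh₀_cont.aestronglyMeasurable
    have a4 : AEStronglyMeasurable h volume := hh_sm.continuous.aestronglyMeasurable
    calc eLpNorm (((f : EuclideanSpace ℝ (Fin n) → ℂ) - g) + ((g - h₀) + (h₀ - h))) 2 volume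
        ≤ eLpNorm ((f : EuclideanSpace ℝ (Fin n) → ℂ) - g) 2 volume +
          eLpNorm ((g - h₀) + (h₀ - h)) 2 volume :=
          eLpNorm_add_le (a1.sub a2) ((a2.sub a3).add (a3.sub a4)) one_le_two
      _ ≤ eLpNorm ((f : EuclideanSpace ℝ (Fin n) → ℂ) - g) 2 volume +
          (eLpNorm (g - h₀) 2 volume + eLpNorm (h₀ - h) 2 volume) := by
          gcongr
          exact eLpNorm_add_le (a2.sub a3) (a3.sub a4) one_le_two
      _ ≤ ENNReal.ofReal (ε/4) + (ENNReal.ofReal (ε/4) + ENNReal.ofReal (ε/4)) := by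
          gcongr
      _ = ENNReal.ofReal (3*(ε/4)) := by
          rw [← ENNReal.ofReal_add (by linarith) (by linarith),
            ← ENNReal.ofReal_add (by linarith) (by linarith)]
          ring_nf
  have hdist : dist f (hmem.toLp h) = (eLpNorm ((f : EuclideanSpace ℝ (Fin n) → ℂ) - h)
      2 volume).toReal := by
    rw [dist_eq_norm]
    conv_lhs => rw [← Lp.toLp_coeFn f (Lp.memLp f)]
    rw [← MemLp.toLp_sub, Lp.norm_toLp]
  rw [hdist]
  have := ENNReal.toReal_le_of_le_ofReal (by linarith) htot
  linarith

end DenseAux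

/-- The set `{ξ ↦ |ξ| (ℱφ)(ξ) : φ ∈ 𝒮(ℝⁿ)}` is dense in `L²(ℝⁿ)`. -/
theorem dense_abs_mul_fourier_schwartz (n : ℕ) (hn : 1 ≤ n) :
    Dense {g : Lp ℂ 2 (volume : Measure (EuclideanSpace ℝ (Fin n))) |
      ∃ φ : SchwartzMap (EuclideanSpace ℝ (Fin n)) ℂ,
        ∀ᵐ ξ ∂(volume : Measure (EuclideanSpace ℝ (Fin n))),
          (g : EuclideanSpace ℝ (Fin n) → ℂ) ξ =
            (‖ξ‖ : ℂ) * 𝓕 (φ : EuclideanSpace ℝ (Fin n) → ℂ) ξ} := by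
  rw [Metric.dense_iff]
  intro f r hr
  obtain ⟨h, hmem, δ, hδ, hsm, hsupp, hvan, hdist⟩ := DenseAux.approx hn f hr
  obtain ⟨φ, hφ⟩ := DenseAux.mem_test h hsm hsupp hδ hvan
  refine ⟨hmem.toLp h, mem_inter ?_ ?_⟩
  · rw [mem_ball, dist_comm]
    exact hdist
  · refine ⟨φ, ?_⟩
    filter_upwards [hmem.coeFn_toLp] with ξ hξ
    rw [hξ, hφ ξ]
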